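/- Suppose q > μ, fix ε₂ ∈ ℝ, and let g : (−∞, ε₂) → (0, k*) be the (unique) continuously differentiable solution of g'(s) = 1 − Z(g(s))/(q·W(g(s))) with lim_{s↑ε₂} g(s) = 0 and lim_{s→−∞} g(s) = k*. Then the map s ↦ s − g(s) is strictly increasing on (−∞, ε₂), tends to −∞ as s → −∞ and to ε₂ as s ↑ ε₂. Consequently, for every ε₁ < ε₂ there exists a unique A ∈ (−∞, ε₂) with A − g(A) = ε₁; moreover A > ε₁. -/

import Mathlib

open Real Filter Set MeasureTheory

noncomputable def dlt (σ μ q : ℝ) : ℝ := Real.sqrt ((μ / σ ^ 2 - 1 / 2) ^ 2 + 2 * q / σ ^ 2)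

noncomputable def gma (σ μ : ℝ) : ℝ := 1 / 2 - μ / σ ^ 2

noncomputable def gma1 (σ μ q : ℝ) : ℝ := gma σ μ - dlt σ μ q

noncomputable def gma2 (σ μ q : ℝ) : ℝ := gma σ μ + dlt σ μ q

/-- The scale function `W^{(q)}` of `X_t = (μ - σ²/2) t + σ B_t`. -/
noncomputable def W (σ μ q : ℝ) (x : ℝ) : ℝ :=
  if 0 ≤ x then 2 / (σ ^ 2 * dlt σ μ q) * Real.exp (gma σ μ * x) * Real.sinh (dlt σ μ q * x)
  else 0

/-- The scale function `Z^{(q)}` of `X_t = (μ - σ²/2) t + σ B_t`. -/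
noncomputable def Z (σ μ q : ℝ) (x : ℝ) : ℝ :=
  if 0 ≤ x then
    Real.exp (gma σ μ * x) * Real.cosh (dlt σ μ q * x)
      - gma σ μ / dlt σ μ q * Real.exp (gma σ μ * x) * Real.sinh (dlt σ μ q * x)
  else 1

/-- `k* = (γ₂ - γ₁)⁻¹ log((1 - 1/γ₁)/(1 - 1/γ₂))`. -/
noncomputable def kstar (σ μ q : ℝ) : ℝ :=
  (gma2 σ μ q - gma1 σ μ q)⁻¹ *
    Real.log ((1 - 1 / gma1 σ μ q) / (1 - 1 / gma2 σ μ q))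

theorem stmt_16 (σ μ q ε₂ : ℝ) (hσ : 0 < σ) (hq : 0 < q) (hqμ : μ < q)
    (g : ℝ → ℝ)
    (hmem : ∀ s ∈ Set.Iio ε₂, g s ∈ Set.Ioo 0 (kstar σ μ q))
    (hg : ContDiffOn ℝ 1 g (Set.Iio ε₂))
    (hode : ∀ s ∈ Set.Iio ε₂, HasDerivAt g (1 - Z σ μ q (g s) / (q * W σ μ q (g s))) s)
    (hlim0 : Filter.Tendsto g (nhdsWithin ε₂ (Set.Iio ε₂)) (nhds 0))
    (hlimk : Filter.Tendsto g Filter.atBot (nhds (kstar σ μ q))) :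
    StrictMonoOn (fun s => s - g s) (Set.Iio ε₂) ∧
    Filter.Tendsto (fun s => s - g s) Filter.atBot Filter.atBot ∧
    Filter.Tendsto (fun s => s - g s) (nhdsWithin ε₂ (Set.Iio ε₂)) (nhds ε₂) ∧
    ∀ ε₁ : ℝ, ε₁ < ε₂ →
      (∃! A : ℝ, A < ε₂ ∧ A - g A = ε₁) ∧
      ∀ A : ℝ, A < ε₂ → A - g A = ε₁ → ε₁ < A := by
  have hσ2 : (0:ℝ) < σ ^ 2 := by positivity
  have hδ : 0 < dlt σ μ q := Real.sqrt_pos.mpr (by positivity)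
  have hγδ : |gma σ μ| < dlt σ μ q := by
    have h1 : (gma σ μ) ^ 2 < (μ / σ ^ 2 - 1 / 2) ^ 2 + 2 * q / σ ^ 2 := by
      have : (gma σ μ) ^ 2 = (μ / σ ^ 2 - 1 / 2) ^ 2 := by unfold gma; ring
      rw [this]; have : 0 < 2 * q / σ ^ 2 := by positivity
      linarith
    calc |gma σ μ| = Real.sqrt ((gma σ μ) ^ 2) := (Real.sqrt_sq_eq_abs _).symm
      _ < dlt σ μ q := Real.sqrt_lt_sqrt (by positivity) h1
  have hW : ∀ x : ℝ, 0 < x → 0 < W σ μ q x := by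
    intro x hx
    have hs : 0 < Real.sinh (dlt σ μ q * x) := Real.sinh_pos_iff.mpr (by positivity)
    rw [W, if_pos hx.le]
    positivity
  have hZ : ∀ x : ℝ, 0 < x → 0 < Z σ μ q x := by
    intro x hx
    rw [Z, if_pos hx.le]
    have hs : 0 < Real.sinh (dlt σ μ q * x) := Real.sinh_pos_iff.mpr (by positivity)
    have hsc : Real.sinh (dlt σ μ q * x) < Real.cosh (dlt σ μ q * x) := Real.sinh_lt_cosh _
    have habs := abs_lt.mp hγδ
    have he : 0 < Real.exp (gma σ μ * x) := Real.exp_pos _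
    have key : gma σ μ / dlt σ μ q * Real.sinh (dlt σ μ q * x) < Real.cosh (dlt σ μ q * x) := by
      rw [div_mul_eq_mul_div, div_lt_iff₀ hδ]
      nlinarith [habs.1, habs.2]
    nlinarith
  -- derivative of f
  set f : ℝ → ℝ := fun s => s - g s with hf
  have hfd : ∀ s ∈ Set.Iio ε₂,
      HasDerivAt f (Z σ μ q (g s) / (q * W σ μ q (g s))) s := by
    intro s hs
    have := (hasDerivAt_id s).sub (hode s hs)
    exact this.congr_deriv (by ring)
  have hpos : ∀ s ∈ Set.Iio ε₂, 0 < Z σ μ q (g s) / (q * W σ μ q (g s)) := by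
    intro s hs
    have hg0 := (hmem s hs).1
    exact div_pos (hZ _ hg0) (mul_pos hq (hW _ hg0))
  have hcont : ContinuousOn f (Set.Iio ε₂) :=
    fun s hs => ((hfd s hs).continuousAt).continuousWithinAt
  have hmono : StrictMonoOn f (Set.Iio ε₂) := by
    apply strictMonoOn_of_deriv_pos (convex_Iio ε₂) hcont
    intro s hs
    rw [interior_Iio] at hs
    rw [(hfd s hs).deriv]
    exact hpos s hs
  have h2 : Filter.Tendsto f Filter.atBot Filter.atBot := by
    apply tendsto_atBot_mono' Filter.atBot ?_ tendsto_id
    filter_upwards [eventually_lt_atBot ε₂] with s hs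
    have := (hmem s hs).1
    simp only [hf, id]
    linarith
  have h3 : Filter.Tendsto f (nhdsWithin ε₂ (Set.Iio ε₂)) (nhds ε₂) := by
    have hid : Filter.Tendsto (fun s : ℝ => s) (nhdsWithin ε₂ (Set.Iio ε₂)) (nhds ε₂) :=
      tendsto_id.mono_left nhdsWithin_le_nhds
    simpa using hid.sub hlim0
  refine ⟨hmono, h2, h3, ?_⟩
  intro ε₁ hε
  constructor
  · obtain ⟨a, haε, hafa⟩ : ∃ a, a < ε₂ ∧ f a < ε₁ := by
      obtain ⟨a, ha1, ha2⟩ :=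
        ((h2.eventually (eventually_lt_atBot ε₁)).and (eventually_lt_atBot ε₂)).exists
      exact ⟨a, ha2, ha1⟩
    obtain ⟨b, hb1, hb2⟩ : ∃ b, ε₁ < f b ∧ b ∈ Set.Iio ε₂ := by
      haveI : (nhdsWithin ε₂ (Set.Iio ε₂)).NeBot := nhdsLT_neBot ε₂
      exact ((h3.eventually (eventually_gt_nhds hε)).and
        (eventually_mem_nhdsWithin)).exists
    have hab : a ≤ b := by
      by_contra h
      push_neg at h
      have := hmono hb2 haε h
      linarith
    have hsub : Set.Icc a b ⊆ Set.Iio ε₂ := fun x hx => lt_of_le_of_lt hx.2 hb2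
    obtain ⟨A, hA, hfA⟩ := intermediate_value_Icc hab (hcont.mono hsub) ⟨hafa.le, hb1.le⟩
    have hAε : A < ε₂ := hsub hA
    refine ⟨A, ⟨hAε, hfA⟩, ?_⟩
    intro y hy
    exact hmono.injOn hy.1 hAε (hy.2.trans hfA.symm)
  · intro A hA hfA
    have := (hmem A hA).1
    linarith
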